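/- If v ∈ R^n is a fixed point of the ADMM map, i.e. (v, η) satisfies -M^{-1}(p - ρ(2Π(v) - v), -b) + (v, η) - (Π(v), η) = (v, η) with M = [[Q+ρI, Aᵀ],[A,0]], then x* = Π(v) satisfies the KKT conditions of the QP minimize (1/2)xᵀQx + pᵀx subject to Ax = b, l ≤ x ≤ u, with equality-constraint multiplier η and inequality multipliers λ₋* = -min(ρ(v - Π(v)), 0), λ₊* = max(ρ(v - Π(v)), 0): namely Qx* + p + Aᵀη - λ₋* + λ₊* = 0, Ax* = b, l ≤ x* ≤ u, λ₋*, λ₊* ≥ 0, and complementary slackness holds. -/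

import Mathlib

open Matrix

/-- If `(v, η)` is a fixed point of the ADMM map, then `x* = Π(v)` satisfies the KKT
conditions of the QP `min (1/2)xᵀQx + pᵀx s.t. Ax = b, l ≤ x ≤ u` with multipliers `η`,
`λ₋ = -min(ρ(v - Π(v)), 0)`, `λ₊ = max(ρ(v - Π(v)), 0)`. -/
theorem admm_fixed_point_satisfies_kkt (n m : ℕ) (Q : Matrix (Fin n) (Fin n) ℝ)
    (A : Matrix (Fin m) (Fin n) ℝ) (hQ : Q.PosDef) (hA : A.rank = m)
    (p l u : Fin n → ℝ) (b : Fin m → ℝ) (hlu : ∀ j, l j ≤ u j) (ρ : ℝ) (hρ : 0 < ρ)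
    (proj : (Fin n → ℝ) → Fin n → ℝ)
    (hproj : ∀ x j, proj x j = max (l j) (min (x j) (u j)))
    (v : Fin n → ℝ) (η : Fin m → ℝ)
    (M : Matrix (Fin n ⊕ Fin m) (Fin n ⊕ Fin m) ℝ)
    (hM : M = Matrix.fromBlocks (Q + ρ • 1) Aᵀ A 0)
    (hfix : -(M⁻¹ *ᵥ Sum.elim (p - ρ • ((2 : ℝ) • proj v - v)) (-b))
        + Sum.elim v η - Sum.elim (proj v) η = Sum.elim v η)
    (x lm lp : Fin n → ℝ) (hx : x = proj v)
    (hlm : ∀ j, lm j = -(min (ρ * (v j - proj v j)) 0))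
    (hlp : ∀ j, lp j = max (ρ * (v j - proj v j)) 0) :
    Q *ᵥ x + p + Aᵀ *ᵥ η - lm + lp = 0 ∧
    A *ᵥ x = b ∧
    (∀ j, l j ≤ x j ∧ x j ≤ u j) ∧
    (∀ j, 0 ≤ lm j ∧ 0 ≤ lp j ∧ lm j * (l j - x j) = 0 ∧ lp j * (x j - u j) = 0) := by
  subst hM hx
  -- surjectivity of A.mulVec
  have hsurj : Function.Surjective A.mulVec := by
    have hrange : LinearMap.range A.mulVecLin = ⊤ := by
      apply Submodule.eq_top_of_finrank_eq
      rw [Module.finrank_fin_fun ℝ]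
      exact hA
    intro y
    have hy : y ∈ LinearMap.range A.mulVecLin := hrange ▸ Submodule.mem_top
    obtain ⟨t, ht⟩ := hy
    exact ⟨t, ht⟩
  -- positive definiteness of Q + ρ • 1 (key quadratic form fact)
  have key : ∀ y : Fin n → ℝ, y ≠ 0 → 0 < y ⬝ᵥ ((Q + ρ • 1) *ᵥ y) := by
    intro y hy
    have h1 := hQ.dotProduct_mulVec_pos hy
    have hnn : 0 ≤ y ⬝ᵥ y := Finset.sum_nonneg fun i _ => mul_self_nonneg (y i)
    have hne : y ⬝ᵥ y ≠ 0 := fun h => hy (dotProduct_self_eq_zero.mp h)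
    have h2 : 0 < ρ * (y ⬝ᵥ y) := mul_pos hρ (lt_of_le_of_ne hnn (Ne.symm hne))
    simp only [star_trivial] at h1
    rw [Matrix.add_mulVec, dotProduct_add, Matrix.smul_mulVec, Matrix.one_mulVec,
      dotProduct_smul, smul_eq_mul]
    linarith
  -- M has trivial kernel
  have hker : ∀ z : (Fin n ⊕ Fin m) → ℝ,
      Matrix.fromBlocks (Q + ρ • 1) Aᵀ A 0 *ᵥ z = 0 → z = 0 := by
    intro z hz
    rw [Matrix.fromBlocks_mulVec] at hz
    set y := z ∘ Sum.inl with hyd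
    set w := z ∘ Sum.inr with hwd
    have h1 : (Q + ρ • 1) *ᵥ y + Aᵀ *ᵥ w = 0 := by
      funext j; simpa using congrFun hz (Sum.inl j)
    have hAy : A *ᵥ y = 0 := by
      funext i
      have := congrFun hz (Sum.inr i)
      simpa [Matrix.zero_mulVec] using this
    have hy0 : y = 0 := by
      by_contra hy
      have hpos := key y hy
      have h2 : y ⬝ᵥ ((Q + ρ • 1) *ᵥ y + Aᵀ *ᵥ w) = 0 := by rw [h1]; simp
      rw [dotProduct_add, Matrix.dotProduct_mulVec y Aᵀ w, Matrix.vecMul_transpose, hAy] at h2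
      simp only [zero_dotProduct] at h2
      linarith
    have hAtw : Aᵀ *ᵥ w = 0 := by
      rw [hy0] at h1; simpa using h1
    have hw0 : w = 0 := by
      funext i
      obtain ⟨t, ht⟩ := hsurj (Pi.single i 1)
      have hz2 : w ⬝ᵥ (A *ᵥ t) = 0 := by
        rw [Matrix.dotProduct_mulVec, ← Matrix.mulVec_transpose, hAtw]
        simp
      rw [ht, dotProduct_single] at hz2
      simpa using hz2
    funext s
    cases s with
    | inl j => exact congrFun hy0 j
    | inr i => exact congrFun hw0 i
  set M := Matrix.fromBlocks (Q + ρ • 1) Aᵀ A 0 with hMd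
  have hdet : IsUnit M.det := by
    rw [isUnit_iff_ne_zero]
    intro h
    obtain ⟨z, hz, hz0⟩ := Matrix.exists_mulVec_eq_zero_iff.mpr h
    exact hz (hker z hz0)
  set w0 : (Fin n ⊕ Fin m) → ℝ := Sum.elim (p - ρ • ((2 : ℝ) • proj v - v)) (-b) with hw0d
  have hfp : M⁻¹ *ᵥ w0 = -(Sum.elim (proj v) η) := by
    funext s
    have := congrFun hfix s
    simp only [Pi.add_apply, Pi.sub_apply, Pi.neg_apply] at this ⊢
    linarith
  have hMw : w0 = M *ᵥ (-(Sum.elim (proj v) η)) := by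
    rw [← hfp, Matrix.mulVec_mulVec, Matrix.mul_nonsing_inv M hdet, Matrix.one_mulVec]
  rw [Matrix.mulVec_neg, hMd, Matrix.fromBlocks_mulVec] at hMw
  simp only [Sum.elim_comp_inl, Sum.elim_comp_inr, Matrix.zero_mulVec, add_zero] at hMw
  have eq1 : ∀ j, ((Q + ρ • 1) *ᵥ proj v) j + (Aᵀ *ᵥ η) j
      = -(p j - ρ * (2 * proj v j - v j)) := by
    intro j
    have := congrFun hMw (Sum.inl j)
    simp only [hw0d, Sum.elim_inl, Pi.neg_apply, Pi.add_apply, Pi.sub_apply, Pi.smul_apply,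
      smul_eq_mul] at this
    linarith
  have eq2 : A *ᵥ proj v = b := by
    funext i
    have := congrFun hMw (Sum.inr i)
    simp only [hw0d, Sum.elim_inr, Pi.neg_apply] at this
    linarith
  refine ⟨?_, eq2, ?_, ?_⟩
  · funext j
    have h1 := eq1 j
    rw [Matrix.add_mulVec, Matrix.smul_mulVec, Matrix.one_mulVec] at h1
    simp only [Pi.add_apply, Pi.smul_apply, smul_eq_mul] at h1
    have hminmax : min (ρ * (v j - proj v j)) 0 + max (ρ * (v j - proj v j)) 0
        = ρ * (v j - proj v j) := by simp [min_add_max (ρ * (v j - proj v j)) 0]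
    simp only [Pi.add_apply, Pi.sub_apply, Pi.zero_apply, hlm j, hlp j]
    linarith
  · intro j
    rw [hproj]
    exact ⟨le_max_left _ _, max_le (hlu j) (min_le_right _ _)⟩
  · intro j
    have hlmj := hlm j
    have hlpj := hlp j
    refine ⟨by rw [hlmj]; simp [min_le_right], by rw [hlpj]; simp [le_max_right], ?_, ?_⟩
    · rcases max_cases (l j) (min (v j) (u j)) with ⟨he, hc⟩ | ⟨he, hc⟩
      · have : l j - proj v j = 0 := by rw [hproj, he]; ring
        rw [this, mul_zero]
      · have hvp : proj v j ≤ v j := by rw [hproj, he]; exact min_le_left _ _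
        have : lm j = 0 := by
          rw [hlmj, min_eq_right (by nlinarith : ρ * (v j - proj v j) ≥ 0)]
          · simp
        rw [this, zero_mul]
    · rcases min_cases (v j) (u j) with ⟨he, hc⟩ | ⟨he, hc⟩
      · have hvp : v j ≤ proj v j := by rw [hproj, he]; exact le_max_right _ _
        have : lp j = 0 := by
          rw [hlpj, max_eq_right (by nlinarith : ρ * (v j - proj v j) ≤ 0)]
        rw [this, zero_mul]
      · have : proj v j - u j = 0 := by
          rw [hproj, he, max_eq_right (hlu j)]; ring
        rw [this, mul_zero]
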